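/- arXiv:1504.01701 — 4 statements merged into one kernel-verified Lean document; each statement's English description precedes it below -/
import Mathlib

section
/- For every natural number a ≥ 1 and integer d, the set of natural numbers x satisfying s_2(x+a) - s_2(x) = d is a finite (possibly empty) union of sets of the form {x : x ≡ r mod 2^m} for suitable residues r and exponents m; equivalently, membership of x in this set depends only on the first m binary digits of x for some m depending on a and d. -/
/-- `s2 n` is the number of digits 1 in the binary expansion of `n`. -/
def s2 (n : ℕ) : ℕ := (Nat.digits 2 n).sum

lemma s2_two_mul (n : ℕ) : s2 (2 * n) = s2 n := by
  rcases Nat.eq_zero_or_pos n with h | h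
  · simp [h]
  · unfold s2
    rw [Nat.digits_def' (by norm_num : 1 < 2) (by omega)]
    simp [Nat.mul_mod_right, Nat.mul_div_cancel_left _ (by norm_num : 0 < 2)]

lemma s2_two_mul_add_one (n : ℕ) : s2 (2 * n + 1) = s2 n + 1 := by
  unfold s2
  rw [Nat.digits_def' (by norm_num : 1 < 2) (by omega)]
  simp [Nat.mul_add_mod, Nat.mul_add_div (by norm_num : 0 < 2)]
  omega

lemma f1_le (x : ℕ) : (s2 (x + 1) : ℤ) ≤ (s2 x : ℤ) + 1 := by
  induction x using Nat.strong_induction_on with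
  | _ x IH =>
    rcases Nat.even_or_odd x with ⟨y, hy⟩ | ⟨y, hy⟩
    · have hx : x = 2 * y := by omega
      subst hx
      rw [show 2 * y + 1 = 2 * y + 1 from rfl, s2_two_mul_add_one, s2_two_mul]
      push_cast; omega
    · have hx : x = 2 * y + 1 := by omega
      subst hx
      rw [show 2 * y + 1 + 1 = 2 * (y + 1) from by ring, s2_two_mul, s2_two_mul_add_one]
      have := IH y (by omega)
      push_cast at *; omega

lemma combine (P : ℕ → Prop) (m1 m2 : ℕ) (R1 R2 : Finset ℕ)
    (h1 : ∀ y, P (2 * y) ↔ y % 2 ^ m1 ∈ R1)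
    (h2 : ∀ y, P (2 * y + 1) ↔ y % 2 ^ m2 ∈ R2) :
    ∃ (m : ℕ) (R : Finset ℕ), ∀ x, P x ↔ x % 2 ^ m ∈ R := by
  classical
  set m := max m1 m2 with hm
  refine ⟨m + 1, (Finset.range (2 ^ (m + 1))).filter
    (fun s => if s % 2 = 0 then s / 2 % 2 ^ m1 ∈ R1 else s / 2 % 2 ^ m2 ∈ R2),
    fun x => ?_⟩
  have hlt : x % 2 ^ (m + 1) < 2 ^ (m + 1) := Nat.mod_lt _ (by positivity)
  have hpow : (2 : ℕ) ^ (m + 1) = 2 * 2 ^ m := by ring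
  have hdiv : x % 2 ^ (m + 1) / 2 = x / 2 % 2 ^ m := by
    rw [hpow]; exact Nat.mod_mul_right_div_self x 2 (2 ^ m)
  have hmod2 : x % 2 ^ (m + 1) % 2 = x % 2 := Nat.mod_mod_of_dvd x ⟨2 ^ m, hpow⟩
  rw [Finset.mem_filter, Finset.mem_range]
  have h1d : (2 : ℕ) ^ m1 ∣ 2 ^ m := pow_dvd_pow 2 (le_max_left _ _)
  have h2d : (2 : ℕ) ^ m2 ∣ 2 ^ m := pow_dvd_pow 2 (le_max_right _ _)
  rcases Nat.even_or_odd x with ⟨y, hy⟩ | ⟨y, hy⟩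
  · have hx : x = 2 * y := by omega
    subst hx
    have he : (2 * y) % 2 = 0 := by omega
    rw [h1 y]
    simp only [hlt, true_and, hmod2, hdiv, he, if_true]
    rw [show (2 * y) / 2 = y from by omega, Nat.mod_mod_of_dvd y h1d]
  · have hx : x = 2 * y + 1 := by omega
    subst hx
    have he : (2 * y + 1) % 2 = 1 := by omega
    rw [h2 y]
    simp only [hlt, true_and, hmod2, hdiv, he, if_false]
    rw [show (2 * y + 1) / 2 = y from by omega, Nat.mod_mod_of_dvd y h2d]
    simp

lemma key1_base (d : ℤ) (hd : 1 ≤ d) :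
    ∃ (m : ℕ) (R : Finset ℕ),
      ∀ x : ℕ, ((s2 (x + 1) : ℤ) - s2 x = d ↔ x % 2 ^ m ∈ R) := by
  rcases eq_or_lt_of_le hd with rfl | hd
  · refine ⟨1, {0}, fun x => ?_⟩
    simp only [pow_one, Finset.mem_singleton]
    rcases Nat.even_or_odd x with ⟨y, hy⟩ | ⟨y, hy⟩
    · have hx : x = 2 * y := by omega
      subst hx
      rw [show 2 * y + 1 = 2 * y + 1 from rfl, s2_two_mul_add_one, s2_two_mul]
      constructor
      · intro _; omega
      · intro _; push_cast; ring
    · have hx : x = 2 * y + 1 := by omega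
      subst hx
      rw [show 2 * y + 1 + 1 = 2 * (y + 1) from by ring, s2_two_mul, s2_two_mul_add_one]
      have := f1_le y
      constructor
      · intro h; push_cast at h; omega
      · intro h; omega
  · refine ⟨0, ∅, fun x => ?_⟩
    simp only [Finset.notMem_empty, iff_false]
    intro h
    have := f1_le x
    omega

lemma key1 : ∀ n : ℕ, ∀ d : ℤ, (1 - d).toNat ≤ n →
    ∃ (m : ℕ) (R : Finset ℕ),
      ∀ x : ℕ, ((s2 (x + 1) : ℤ) - s2 x = d ↔ x % 2 ^ m ∈ R) := by
  intro n
  induction n with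
  | zero =>
    intro d hd
    exact key1_base d (by omega)
  | succ n IH =>
    intro d hd
    rcases le_or_gt 1 d with h1 | h1
    · exact key1_base d h1
    · obtain ⟨m', R', h'⟩ := IH (d + 1) (by omega)
      apply combine _ 0 m' ∅ R'
      · intro y
        rw [show 2 * y + 1 = 2 * y + 1 from rfl, s2_two_mul_add_one, s2_two_mul]
        simp only [Finset.notMem_empty, iff_false]
        intro h; push_cast at h; omega
      · intro y
        rw [show 2 * y + 1 + 1 = 2 * (y + 1) from by ring, s2_two_mul, s2_two_mul_add_one]
        rw [← h' y]
        push_cast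
        constructor <;> (intro h; omega)

lemma key : ∀ a : ℕ, 1 ≤ a → ∀ d : ℤ,
    ∃ (m : ℕ) (R : Finset ℕ),
      ∀ x : ℕ, ((s2 (x + a) : ℤ) - s2 x = d ↔ x % 2 ^ m ∈ R) := by
  intro a
  induction a using Nat.strong_induction_on with
  | _ a IH =>
    intro ha d
    rcases Nat.even_or_odd a with ⟨b, hb⟩ | ⟨b, hb⟩
    · -- a = 2 * b, b ≥ 1
      have hab : a = 2 * b := by omega
      subst hab
      obtain ⟨m, R, h⟩ := IH b (by omega) (by omega) d
      apply combine _ m m R R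
      · intro y
        rw [show 2 * y + 2 * b = 2 * (y + b) from by ring, s2_two_mul, s2_two_mul]
        exact h y
      · intro y
        rw [show 2 * y + 1 + 2 * b = 2 * (y + b) + 1 from by ring,
          s2_two_mul_add_one, s2_two_mul_add_one]
        rw [← h y]
        push_cast
        constructor <;> (intro hh; omega)
    · -- a = 2 * b + 1
      rcases Nat.eq_zero_or_pos b with hb0 | hb0
      · subst hb0
        rw [hb]
        exact key1 (1 - d).toNat d le_rfl
      · have hab : a = 2 * b + 1 := hb
        subst hab
        obtain ⟨m1, R1, h1⟩ := IH b (by omega) (by omega) (d - 1)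
        obtain ⟨m2, R2, h2⟩ := IH (b + 1) (by omega) (by omega) (d + 1)
        apply combine _ m1 m2 R1 R2
        · intro y
          rw [show 2 * y + (2 * b + 1) = 2 * (y + b) + 1 from by ring,
            s2_two_mul_add_one, s2_two_mul]
          rw [← h1 y]
          push_cast
          constructor <;> (intro hh; omega)
        · intro y
          rw [show 2 * y + 1 + (2 * b + 1) = 2 * (y + (b + 1)) from by ring,
            s2_two_mul, s2_two_mul_add_one]
          rw [← h2 y]
          push_cast
          constructor <;> (intro hh; omega)

/-- The set of solutions of `s2 (x+a) - s2 x = d` is determined by the first `m`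
binary digits of `x`, i.e. it is a finite union of residue classes mod `2^m`. -/
theorem solutions_are_union_of_cylinders (a : ℕ) (ha : 1 ≤ a) (d : ℤ) :
    ∃ (m : ℕ) (R : Finset ℕ),
      ∀ x : ℕ, ((s2 (x + a) : ℤ) - s2 x = d ↔ x % 2 ^ m ∈ R) :=
  key a ha d
end

section
/- For every natural number a ≥ 1 and every integer d, the limit μ_a(d) := lim_{N→∞} (1/N)·#{x ≤ N : s_2(x+a) - s_2(x) = d} exists. -/
open Filter

lemma s2_bit (n b : ℕ) (hb : b < 2) : s2 (2 * n + b) = s2 n + b := by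
  rcases Nat.eq_zero_or_pos n with h | h
  · subst h
    interval_cases b <;> simp [s2]
  · have h0 : 0 < 2 * n + b := by omega
    unfold s2
    rw [Nat.digits_def' (by norm_num : 1 < 2) h0]
    have h1 : (2 * n + b) % 2 = b := by omega
    have h2 : (2 * n + b) / 2 = n := by omega
    rw [List.sum_cons, h1, h2]
    omega

lemma s2_split (M q r : ℕ) (hr : r < 2 ^ M) : s2 (q * 2 ^ M + r) = s2 q + s2 r := by
  induction M generalizing r with
  | zero =>
    interval_cases r
    simp [s2]
  | succ M ih =>
    have hr2 : r / 2 < 2 ^ M := by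
      have : 2 ^ (M + 1) = 2 * 2 ^ M := by ring
      omega
    have h1 : q * 2 ^ (M + 1) + r = 2 * (q * 2 ^ M + r / 2) + r % 2 := by
      have h3 : q * 2 ^ (M + 1) = 2 * (q * 2 ^ M) := by ring
      omega
    rw [h1, s2_bit _ _ (Nat.mod_lt _ (by norm_num)), ih _ hr2]
    have h2 : s2 r = s2 (r / 2) + r % 2 := by
      conv_lhs => rw [show r = 2 * (r / 2) + r % 2 by omega]
      exact s2_bit _ _ (Nat.mod_lt _ (by norm_num))
    omega

def Fc (a : ℕ) (d : ℤ) (n : ℕ) : ℕ :=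
  ((Finset.range n).filter (fun x => (s2 (x + a) : ℤ) - s2 x = d)).card

def Kc (a : ℕ) (d : ℤ) (M : ℕ) : ℕ :=
  ((Finset.range (2 ^ M)).filter
    (fun r => r + a < 2 ^ M ∧ (s2 (r + a) : ℤ) - s2 r = d)).card

lemma cond_shift (a : ℕ) (d : ℤ) (M q r : ℕ) (h : r + a < 2 ^ M) :
    ((s2 (q * 2 ^ M + r + a) : ℤ) - s2 (q * 2 ^ M + r) = d) ↔
      ((s2 (r + a) : ℤ) - s2 r = d) := by
  have h1 : q * 2 ^ M + r + a = q * 2 ^ M + (r + a) := by omega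
  rw [h1, s2_split M q (r + a) h, s2_split M q r (by omega)]
  push_cast
  constructor <;> intro hh <;> linarith

lemma Fc_mono (a : ℕ) (d : ℤ) {n m : ℕ} (h : n ≤ m) : Fc a d n ≤ Fc a d m :=
  Finset.card_le_card (Finset.filter_subset_filter _ (Finset.range_subset_range.2 h))

lemma Kc_le (a : ℕ) (d : ℤ) (M : ℕ) : Kc a d M ≤ 2 ^ M :=
  le_trans (Finset.card_filter_le _ _) (le_of_eq (Finset.card_range _))

lemma bad_card (a : ℕ) (P : ℕ) :
    ((Finset.range P).filter (fun r => ¬ r + a < P)).card ≤ a := by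
  have hsub : (Finset.range P).filter (fun r => ¬ r + a < P) ⊆ Finset.Ico (P - a) P := by
    intro x hx
    simp only [Finset.mem_filter, Finset.mem_range, Finset.mem_Ico] at *
    omega
  calc ((Finset.range P).filter (fun r => ¬ r + a < P)).card
      ≤ (Finset.Ico (P - a) P).card := Finset.card_le_card hsub
    _ = P - (P - a) := Nat.card_Ico _ _
    _ ≤ a := by omega

lemma block_count (a : ℕ) (d : ℤ) (M Q : ℕ) :
    Q * Kc a d M ≤ Fc a d (Q * 2 ^ M) ∧ Fc a d (Q * 2 ^ M) ≤ Q * (Kc a d M + a) := by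
  set P := 2 ^ M with hP
  induction Q with
  | zero => simp [Fc]
  | succ Q ih =>
    have hsplit : Fc a d ((Q + 1) * P) =
        Fc a d (Q * P) +
          ((Finset.range P).filter
            (fun r => (s2 (Q * P + r + a) : ℤ) - s2 (Q * P + r) = d)).card := by
      have h1 : Finset.range ((Q + 1) * P) =
          Finset.range (Q * P) ∪ Finset.Ico (Q * P) ((Q + 1) * P) := by
        rw [Finset.range_eq_Ico, Finset.range_eq_Ico]
        exact (Finset.Ico_union_Ico_eq_Ico (Nat.zero_le _)
          (Nat.mul_le_mul_right P (by omega : Q ≤ Q + 1))).symm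
      have h2 : Finset.Ico (Q * P) ((Q + 1) * P) =
          (Finset.range P).map (addLeftEmbedding (Q * P)) := by
        rw [Finset.range_eq_Ico, Finset.map_add_left_Ico]
        congr 1 <;> ring
      unfold Fc
      rw [h1, Finset.filter_union,
        Finset.card_union_of_disjoint, h2, Finset.filter_map, Finset.card_map]
      · congr 1
      · exact Finset.disjoint_filter_filter
          (by rw [Finset.range_eq_Ico]; exact Finset.Ico_disjoint_Ico_consecutive _ _ _)
    have hlow : Kc a d M ≤
        ((Finset.range P).filter
          (fun r => (s2 (Q * P + r + a) : ℤ) - s2 (Q * P + r) = d)).card := by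
      apply Finset.card_le_card
      intro r hr
      simp only [Finset.mem_filter, Finset.mem_range] at *
      exact ⟨hr.1, (cond_shift a d M Q r hr.2.1).2 hr.2.2⟩
    have hhigh : ((Finset.range P).filter
          (fun r => (s2 (Q * P + r + a) : ℤ) - s2 (Q * P + r) = d)).card ≤
        Kc a d M + a := by
      have hsub : (Finset.range P).filter
            (fun r => (s2 (Q * P + r + a) : ℤ) - s2 (Q * P + r) = d) ⊆
          ((Finset.range P).filter
            (fun r => r + a < P ∧ (s2 (r + a) : ℤ) - s2 r = d)) ∪
          ((Finset.range P).filter (fun r => ¬ r + a < P)) := by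
        intro r hr
        simp only [Finset.mem_filter, Finset.mem_range, Finset.mem_union] at *
        by_cases hc : r + a < P
        · exact Or.inl ⟨hr.1, hc, (cond_shift a d M Q r hc).1 hr.2⟩
        · exact Or.inr ⟨hr.1, hc⟩
      calc _ ≤ _ := Finset.card_le_card hsub
        _ ≤ Kc a d M + a := le_trans (Finset.card_union_le _ _)
            (by exact Nat.add_le_add le_rfl (bad_card a P))
    constructor
    · calc (Q + 1) * Kc a d M = Q * Kc a d M + Kc a d M := by ring
        _ ≤ Fc a d (Q * P) + _ := Nat.add_le_add ih.1 hlow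
        _ = Fc a d ((Q + 1) * P) := (hsplit).symm
    · calc Fc a d ((Q + 1) * P) = Fc a d (Q * P) + _ := hsplit
        _ ≤ Q * (Kc a d M + a) + (Kc a d M + a) := Nat.add_le_add ih.2 hhigh
        _ = (Q + 1) * (Kc a d M + a) := by ring

lemma Kc_Fc (a : ℕ) (d : ℤ) (M : ℕ) :
    Kc a d M ≤ Fc a d (2 ^ M) ∧ Fc a d (2 ^ M) ≤ Kc a d M + a := by
  constructor
  · apply Finset.card_le_card
    intro r hr
    simp only [Finset.mem_filter, Finset.mem_range] at *
    exact ⟨hr.1, hr.2.2⟩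
  · have hsub : (Finset.range (2 ^ M)).filter
        (fun x => (s2 (x + a) : ℤ) - s2 x = d) ⊆
        ((Finset.range (2 ^ M)).filter
          (fun r => r + a < 2 ^ M ∧ (s2 (r + a) : ℤ) - s2 r = d)) ∪
        ((Finset.range (2 ^ M)).filter (fun r => ¬ r + a < 2 ^ M)) := by
      intro r hr
      simp only [Finset.mem_filter, Finset.mem_range, Finset.mem_union] at *
      by_cases hc : r + a < 2 ^ M
      · exact Or.inl ⟨hr.1, hc, hr.2⟩
      · exact Or.inr ⟨hr.1, hc⟩
    calc Fc a d (2 ^ M) ≤ _ := Finset.card_le_card hsub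
      _ ≤ Kc a d M + a := le_trans (Finset.card_union_le _ _)
          (Nat.add_le_add le_rfl (bad_card a (2 ^ M)))

noncomputable def cseq (a : ℕ) (d : ℤ) (M : ℕ) : ℝ := (Kc a d M : ℝ) / 2 ^ M

lemma cseq_dist (a : ℕ) (d : ℤ) (M : ℕ) :
    dist (cseq a d M) (cseq a d (M + 1)) ≤ (2 * a : ℝ) * (1 / 2) ^ M := by
  have hb := block_count a d M 2
  have hg := Kc_Fc a d (M + 1)
  have hpow : (2 : ℕ) ^ (M + 1) = 2 * 2 ^ M := by ring
  rw [hpow] at hg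
  -- |Kc(M+1) - 2 * Kc M| ≤ 2a
  have h1 : Kc a d (M + 1) ≤ 2 * Kc a d M + 2 * a := by
    have := le_trans hg.1 hb.2; omega
  have h2 : 2 * Kc a d M ≤ Kc a d (M + 1) + a := by
    have := le_trans hb.1 hg.2; omega
  have hP : (0 : ℝ) < 2 ^ M := by positivity
  have e : cseq a d M - cseq a d (M + 1) =
      (2 * (Kc a d M : ℝ) - Kc a d (M + 1)) / 2 ^ (M + 1) := by
    unfold cseq
    rw [show ((2 : ℝ)) ^ (M + 1) = 2 * 2 ^ M by ring]
    field_simp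
  rw [Real.dist_eq, e, abs_div,
    abs_of_pos (show (0:ℝ) < 2 ^ (M + 1) by positivity)]
  rw [show (2 * a : ℝ) * (1 / 2) ^ M = (4 * a) / 2 ^ (M + 1) by
    rw [show ((2 : ℝ)) ^ (M + 1) = 2 * 2 ^ M by ring]; field_simp; rw [one_div, inv_pow]; field_simp; ring]
  gcongr
  have h1' : (Kc a d (M + 1) : ℝ) ≤ 2 * Kc a d M + 2 * a := by exact_mod_cast h1
  have h2' : 2 * (Kc a d M : ℝ) ≤ Kc a d (M + 1) + a := by exact_mod_cast h2
  rw [abs_le]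
  constructor <;> linarith

lemma main_est (a : ℕ) (d : ℤ) (M N : ℕ) (haM : a ≤ 2 ^ M) (hN : 1 ≤ N) :
    |(Fc a d (N + 1) : ℝ) / N - cseq a d M| ≤
      (2 * a : ℝ) / 2 ^ M + (3 * 2 ^ M : ℝ) / N := by
  set P := 2 ^ M with hPdef
  set K := Kc a d M with hKdef
  set F := Fc a d (N + 1) with hFdef
  set Q := (N + 1) / P with hQdef
  have hPpos : 0 < P := by positivity
  have hQ1 : Q * P ≤ N + 1 := Nat.div_mul_le_self _ _
  have hmod : (N + 1) % P < P := Nat.mod_lt _ hPpos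
  have hdm : Q * P + (N + 1) % P = N + 1 := by
    rw [hQdef]; exact Nat.div_add_mod' _ _
  have hQ2 : N + 1 ≤ Q * P + P := by omega
  have hb1 := (block_count a d M Q).1
  have hb2 := (block_count a d M (Q + 1)).2
  have hK : K ≤ P := Kc_le a d M
  have h1 : Q * K ≤ F := le_trans hb1 (Fc_mono a d hQ1)
  have h2 : F ≤ (Q + 1) * (K + a) :=
    le_trans (Fc_mono a d (show N + 1 ≤ (Q + 1) * P by rw [add_mul, one_mul]; omega)) hb2
  -- nat bounds
  have m1 : K * P ≤ P * P := Nat.mul_le_mul_right _ hK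
  have m2 : a * P ≤ P * P := Nat.mul_le_mul_right _ haM
  have m3 : K ≤ P * P := le_trans hK (Nat.le_mul_of_pos_left _ hPpos)
  have nb1 : F * P ≤ K * N + (N + 1) * a + 3 * (P * P) := by
    calc F * P ≤ ((Q + 1) * (K + a)) * P := Nat.mul_le_mul_right _ h2
      _ = (Q * P) * (K + a) + (K * P + a * P) := by ring
      _ ≤ (N + 1) * (K + a) + (K * P + a * P) :=
          Nat.add_le_add_right (Nat.mul_le_mul_right _ hQ1) _
      _ = (K * N + K + (N + 1) * a) + (K * P + a * P) := by ring
      _ ≤ K * N + (N + 1) * a + 3 * (P * P) := by omega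
  have nb2 : K * N ≤ F * P + P * P := by
    calc K * N ≤ K * (Q * P + P) := Nat.mul_le_mul_left _ (by omega)
      _ = (Q * K) * P + K * P := by ring
      _ ≤ F * P + P * P :=
          Nat.add_le_add (Nat.mul_le_mul_right _ h1) (Nat.mul_le_mul_right _ hK)
  -- cast to ℝ
  have hNR : (0 : ℝ) < N := by exact_mod_cast hN
  have hPcast : ((P : ℕ) : ℝ) = (2 : ℝ) ^ M := by rw [hPdef]; push_cast; ring
  have hPR : (0 : ℝ) < (2 : ℝ) ^ M := by positivity
  have nb1' : (F : ℝ) * 2 ^ M ≤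
      K * N + (N + 1) * a + 3 * (2 ^ M * 2 ^ M) := by
    rw [← hPcast]; exact_mod_cast nb1
  have nb2' : (K : ℝ) * N ≤ F * 2 ^ M + 2 ^ M * 2 ^ M := by
    rw [← hPcast]; exact_mod_cast nb2
  have hcs : cseq a d M = (K : ℝ) / 2 ^ M := by
    unfold cseq; rfl
  rw [hcs]
  have e : (F : ℝ) / N - K / 2 ^ M = ((F : ℝ) * 2 ^ M - K * N) / (N * 2 ^ M) := by
    field_simp
  rw [e, abs_div, abs_of_pos (mul_pos hNR hPR), div_le_iff₀ (mul_pos hNR hPR)]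
  have erhs : ((2 * a : ℝ) / 2 ^ M + (3 * 2 ^ M : ℝ) / N) * (N * 2 ^ M) =
      2 * a * N + 3 * (2 ^ M * 2 ^ M) := by
    field_simp
  rw [erhs]
  have haN : (a : ℝ) ≤ N * a := by
    have h0 : (0 : ℝ) ≤ a := Nat.cast_nonneg a
    have h1 : (1 : ℝ) ≤ N := by exact_mod_cast hN
    nlinarith
  have haN0 : (0 : ℝ) ≤ a * N := by positivity
  rw [abs_le]
  constructor <;> linarith

theorem mu_exists (a : ℕ) (ha : 1 ≤ a) (d : ℤ) :
    ∃ L : ℝ, Tendsto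
      (fun N : ℕ =>
        (((Finset.range (N + 1)).filter
            (fun x => (s2 (x + a) : ℤ) - s2 x = d)).card : ℝ) / N)
      atTop (nhds L) := by
  have hr : (1 / 2 : ℝ) < 1 := by norm_num
  have hdist : ∀ M, dist (cseq a d M) (cseq a d (M + 1)) ≤ (2 * a : ℝ) * (1 / 2) ^ M :=
    cseq_dist a d
  obtain ⟨L, hL⟩ := cauchySeq_tendsto_of_complete
    (cauchySeq_of_le_geometric (1 / 2) (2 * a) hr hdist)
  refine ⟨L, ?_⟩
  have hLd : ∀ M, dist (cseq a d M) L ≤ (2 * a : ℝ) * (1 / 2) ^ M / (1 - 1 / 2) :=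
    dist_le_of_le_geometric_of_tendsto (1 / 2) (2 * a) hr hdist hL
  show Tendsto (fun N : ℕ => (Fc a d (N + 1) : ℝ) / N) atTop (nhds L)
  rw [Metric.tendsto_atTop]
  intro ε hε
  have haR : (0 : ℝ) < a := by exact_mod_cast ha
  obtain ⟨M0, hM0⟩ := exists_pow_lt_of_lt_one
    (show (0 : ℝ) < ε / (8 * a) by positivity) hr
  set M := max M0 a with hMdef
  have haM : a ≤ 2 ^ M :=
    le_trans (le_of_lt (Nat.lt_two_pow_self (n := a))) (Nat.pow_le_pow_right (by norm_num) (le_max_right _ _))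
  have hpowle : ((1 : ℝ) / 2) ^ M ≤ (1 / 2) ^ M0 :=
    pow_le_pow_of_le_one (by norm_num) (by norm_num) (le_max_left _ _)
  have hpM : ((1 : ℝ) / 2) ^ M < ε / (8 * a) := lt_of_le_of_lt hpowle hM0
  obtain ⟨N0, hN0⟩ := exists_nat_gt (12 * (2 : ℝ) ^ M / ε)
  refine ⟨N0 + 1, fun N hNN => ?_⟩
  have hN1 : 1 ≤ N := by omega
  have hNR : (0 : ℝ) < N := by exact_mod_cast hN1
  have hest := main_est a d M N haM hN1
  have htri := dist_triangle ((Fc a d (N + 1) : ℝ) / N) (cseq a d M) L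
  have hBL := hLd M
  have hA : dist ((Fc a d (N + 1) : ℝ) / N) (cseq a d M) ≤
      (2 * a : ℝ) / 2 ^ M + (3 * 2 ^ M : ℝ) / N := by
    rw [Real.dist_eq]; exact hest
  -- convert 2a/2^M to 2a*(1/2)^M
  have hconv : (2 * a : ℝ) / 2 ^ M = 2 * a * (1 / 2) ^ M := by
    rw [one_div, inv_pow]; ring
  -- bound the geometric pieces
  have hgeo : (2 * a : ℝ) * (1 / 2) ^ M / (1 - 1 / 2) = 4 * a * (1 / 2) ^ M := by
    ring
  have hsmall : (6 * a : ℝ) * (1 / 2) ^ M < 3 * ε / 4 := by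
    have h6 : (0 : ℝ) < 6 * a := by positivity
    have := mul_lt_mul_of_pos_left hpM h6
    calc (6 * a : ℝ) * (1 / 2) ^ M < 6 * a * (ε / (8 * a)) := this
      _ = 3 * ε / 4 := by field_simp; ring
  -- bound the 1/N piece
  have hNgt : 12 * (2 : ℝ) ^ M / ε < N := by
    have : (N0 : ℝ) ≤ N := by exact_mod_cast Nat.le_of_succ_le hNN
    linarith
  have hNe : 12 * (2 : ℝ) ^ M < N * ε := by
    rw [div_lt_iff₀ hε] at hNgt; linarith
  have hNpiece : (3 * 2 ^ M : ℝ) / N < ε / 4 := by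
    rw [div_lt_iff₀ hNR]; nlinarith
  have hpow0 : (0 : ℝ) ≤ (1 / 2 : ℝ) ^ M := by positivity
  calc dist ((Fc a d (N + 1) : ℝ) / N) L ≤ _ := htri
    _ ≤ ((2 * a : ℝ) / 2 ^ M + (3 * 2 ^ M : ℝ) / N) + 4 * a * (1 / 2) ^ M := by
        rw [hgeo] at hBL; linarith
    _ = 6 * a * (1 / 2) ^ M + (3 * 2 ^ M : ℝ) / N := by rw [hconv]; ring
    _ < 3 * ε / 4 + ε / 4 := by linarith
    _ = ε := by ring
end

section
/- For every real θ with -π ≤ θ ≤ π, the function φ(θ) = (1 + √(5 + 4cos θ))/4 satisfies φ(θ) ≤ e^{-θ²/15}. -/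
set_option maxHeartbeats 2000000


open Real

private lemma mono0 {f f' : ℝ → ℝ} (hf : ∀ x, HasDerivAt f (f' x) x)
    (hd : ∀ x, 0 ≤ x → 0 ≤ f' x) {x : ℝ} (hx : 0 ≤ x) : f 0 ≤ f x := by
  have hdf : Differentiable ℝ f := fun y => (hf y).differentiableAt
  have hm := monotoneOn_of_deriv_nonneg (convex_Ici (0:ℝ)) hdf.continuous.continuousOn
    (fun y _ => (hdf y).differentiableWithinAt)
    (fun y hy => by rw [(hf y).deriv]; exact hd y (le_of_lt (by simpa using hy)))
  exact hm Set.self_mem_Ici hx hx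

private lemma sin_ge1 {x : ℝ} (hx : 0 ≤ x) : x - x^3/6 ≤ Real.sin x := by
  have h := mono0 (f := fun y => Real.sin y - (y - y^3/6))
      (f' := fun y => Real.cos y - (1 - y^2/2))
      (fun y => by
        have h2 : HasDerivAt (fun y : ℝ => y - y^3/6) (1 - y^2/2) y := by
          have := (hasDerivAt_id y).sub ((hasDerivAt_pow 3 y).div_const 6)
          exact this.congr_deriv (by push_cast; ring)
        exact (Real.hasDerivAt_sin y).sub h2)
      (fun y _ => by nlinarith [Real.one_sub_sq_div_two_le_cos (x := y)]) hx
  simp at h; linarith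

private lemma cos_le1 {x : ℝ} (hx : 0 ≤ x) : Real.cos x ≤ 1 - x^2/2 + x^4/24 := by
  have h := mono0 (f := fun y => 1 - y^2/2 + y^4/24 - Real.cos y)
      (f' := fun y => Real.sin y - (y - y^3/6))
      (fun y => by
        have h2 : HasDerivAt (fun y : ℝ => 1 - y^2/2 + y^4/24) (-(y - y^3/6)) y := by
          have := (((hasDerivAt_const y (1:ℝ)).sub ((hasDerivAt_pow 2 y).div_const 2)).add
            ((hasDerivAt_pow 4 y).div_const 24))
          exact this.congr_deriv (by push_cast; ring)
        have := h2.sub (Real.hasDerivAt_cos y)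
        exact this.congr_deriv (by ring))
      (fun y hy => by have := sin_ge1 hy; linarith) hx
  simp at h; linarith

private lemma sin_le1 {x : ℝ} (hx : 0 ≤ x) : Real.sin x ≤ x - x^3/6 + x^5/120 := by
  have h := mono0 (f := fun y => y - y^3/6 + y^5/120 - Real.sin y)
      (f' := fun y => 1 - y^2/2 + y^4/24 - Real.cos y)
      (fun y => by
        have h2 : HasDerivAt (fun y : ℝ => y - y^3/6 + y^5/120) (1 - y^2/2 + y^4/24) y := by
          have := ((hasDerivAt_id y).sub ((hasDerivAt_pow 3 y).div_const 6)).add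
            ((hasDerivAt_pow 5 y).div_const 120)
          exact this.congr_deriv (by push_cast; ring)
        exact h2.sub (Real.hasDerivAt_sin y))
      (fun y hy => by have := cos_le1 hy; linarith) hx
  simp at h; linarith

private lemma cos_ge1 {x : ℝ} (hx : 0 ≤ x) :
    1 - x^2/2 + x^4/24 - x^6/720 ≤ Real.cos x := by
  have h := mono0 (f := fun y => Real.cos y - (1 - y^2/2 + y^4/24 - y^6/720))
      (f' := fun y => (y - y^3/6 + y^5/120) - Real.sin y)
      (fun y => by
        have h2 : HasDerivAt (fun y : ℝ => 1 - y^2/2 + y^4/24 - y^6/720)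
            (-(y - y^3/6 + y^5/120)) y := by
          have := (((hasDerivAt_const y (1:ℝ)).sub ((hasDerivAt_pow 2 y).div_const 2)).add
            ((hasDerivAt_pow 4 y).div_const 24)).sub ((hasDerivAt_pow 6 y).div_const 720)
          exact this.congr_deriv (by push_cast; ring)
        have := (Real.hasDerivAt_cos y).sub h2
        exact this.congr_deriv (by ring))
      (fun y hy => by have := sin_le1 hy; linarith) hx
  simp at h; linarith

private lemma sin_ge2 {x : ℝ} (hx : 0 ≤ x) :
    x - x^3/6 + x^5/120 - x^7/5040 ≤ Real.sin x := by
  have h := mono0 (f := fun y => Real.sin y - (y - y^3/6 + y^5/120 - y^7/5040))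
      (f' := fun y => Real.cos y - (1 - y^2/2 + y^4/24 - y^6/720))
      (fun y => by
        have h2 : HasDerivAt (fun y : ℝ => y - y^3/6 + y^5/120 - y^7/5040)
            (1 - y^2/2 + y^4/24 - y^6/720) y := by
          have := (((hasDerivAt_id y).sub ((hasDerivAt_pow 3 y).div_const 6)).add
            ((hasDerivAt_pow 5 y).div_const 120)).sub ((hasDerivAt_pow 7 y).div_const 5040)
          exact this.congr_deriv (by push_cast; ring)
        exact (Real.hasDerivAt_sin y).sub h2)
      (fun y hy => by have := cos_ge1 hy; linarith) hx
  simp at h; linarith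

private lemma cos_le2 {x : ℝ} (hx : 0 ≤ x) :
    Real.cos x ≤ 1 - x^2/2 + x^4/24 - x^6/720 + x^8/40320 := by
  have h := mono0 (f := fun y => 1 - y^2/2 + y^4/24 - y^6/720 + y^8/40320 - Real.cos y)
      (f' := fun y => Real.sin y - (y - y^3/6 + y^5/120 - y^7/5040))
      (fun y => by
        have h2 : HasDerivAt (fun y : ℝ => 1 - y^2/2 + y^4/24 - y^6/720 + y^8/40320)
            (-(y - y^3/6 + y^5/120 - y^7/5040)) y := by
          have := ((((hasDerivAt_const y (1:ℝ)).sub ((hasDerivAt_pow 2 y).div_const 2)).add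
            ((hasDerivAt_pow 4 y).div_const 24)).sub ((hasDerivAt_pow 6 y).div_const 720)).add
            ((hasDerivAt_pow 8 y).div_const 40320)
          exact this.congr_deriv (by push_cast; ring)
        have := h2.sub (Real.hasDerivAt_cos y)
        exact this.congr_deriv (by ring))
      (fun y hy => by have := sin_ge2 hy; linarith) hx
  simp at h; linarith

private lemma cos_le8 (x : ℝ) :
    Real.cos x ≤ 1 - x^2/2 + x^4/24 - x^6/720 + x^8/40320 := by
  rcases le_total 0 x with hx | hx
  · exact cos_le2 hx
  · have := cos_le2 (x := -x) (by linarith)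
    rw [Real.cos_neg] at this
    nlinarith [this]

theorem phi_le_gaussian (θ : ℝ) (h1 : -Real.pi ≤ θ) (h2 : θ ≤ Real.pi) :
    (1 + Real.sqrt (5 + 4 * Real.cos θ)) / 4 ≤ Real.exp (-θ ^ 2 / 15) := by
  set t : ℝ := θ ^ 2 with ht
  have h0t : 0 ≤ t := sq_nonneg θ
  have h1t : t ≤ 987/100 := by
    nlinarith [Real.pi_lt_d6, Real.pi_pos, mul_nonneg (sub_nonneg.2 h2)
      (by linarith : (0:ℝ) ≤ θ + Real.pi)]
  have hbt := sub_nonneg.2 h1t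
  -- cosine bound, in terms of t
  have e2 : θ^4 = t^2 := by rw [ht]; ring
  have e3 : θ^6 = t^3 := by rw [ht]; ring
  have e4 : θ^8 = t^4 := by rw [ht]; ring
  have hc : Real.cos θ ≤ 1 - t/2 + t^2/24 - t^3/720 + t^4/40320 := by
    have := cos_le8 θ
    rw [e2, e3, e4] at this
    linarith
  -- exponential lower bound via exp_bound with n = 6
  have habs : |(-t/15 : ℝ)| ≤ 1 := by
    rw [abs_div, abs_neg, abs_of_nonneg h0t]
    rw [abs_of_nonneg (by norm_num : (0:ℝ) ≤ 15)]
    linarith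
  have hb := Real.exp_bound habs (by norm_num : 0 < 6)
  rw [abs_le] at hb
  have hb1 := hb.1
  simp only [Finset.sum_range_succ, Finset.sum_range_zero, Nat.factorial] at hb1
  rw [abs_div, abs_neg, abs_of_nonneg h0t,
    abs_of_nonneg (by norm_num : (0:ℝ) ≤ 15)] at hb1
  norm_num at hb1
  have he : 1 - t/15 + t^2/450 - t^3/20250 + t^4/1215000 - t^5/91125000
      - 7*t^6/49207500000 ≤ Real.exp (-t/15) := by nlinarith [hb1]
  -- polynomial chain
  have hq : 0 ≤ 2/5 - 19/450*t - 1/2700*t^2 + 3569/34020000*t^3 - 7/1265625*t^4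
      + 241/2050312500*t^5 - 22880378219/12814453125000000000*t^6 := by
    nlinarith [mul_nonneg h0t h0t, mul_nonneg (mul_nonneg h0t h0t) h0t, hbt,
      mul_nonneg (mul_nonneg h0t h0t) hbt,
      mul_nonneg (mul_nonneg (mul_nonneg h0t h0t) h0t) hbt,
      mul_nonneg (mul_nonneg h0t h0t) (mul_nonneg hbt hbt),
      mul_nonneg h0t (mul_nonneg hbt hbt),
      mul_nonneg (mul_nonneg (mul_nonneg (mul_nonneg h0t h0t) h0t) h0t) hbt,
      sq_nonneg (t - 5), sq_nonneg (t*t - 5*t)]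
  have hg : 0 ≤ 2/5 - 19/450*t - 1/2700*t^2 + 3569/34020000*t^3 - 7/1265625*t^4
      + 241/2050312500*t^5 - 41/23066015625*t^6 + 1/55358437500*t^7
      - 1/15569560546875*t^8 - 17/9341736328125000*t^9 + 7/140126044921875000*t^10
      + 49/151336128515625000000*t^11 := by
    nlinarith [hq, mul_nonneg (pow_nonneg h0t 6) (sub_nonneg.2 (pow_le_pow_left₀ h0t h1t 2)),
      mul_nonneg (pow_nonneg h0t 6) (sub_nonneg.2 (pow_le_pow_left₀ h0t h1t 3)),
      pow_nonneg h0t 7, pow_nonneg h0t 10, pow_nonneg h0t 11]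
  have hf : 9 - 2*t + t^2/6 - t^3/180 + t^4/10080 ≤
      (3 - 4*t/15 + 2*t^2/225 - 2*t^3/10125 + t^4/303750 - t^5/22781250
        - 7*t^6/12301875000)^2 := by
    nlinarith [mul_nonneg h0t hg]
  have hR : 0 ≤ 3 - 4*t/15 + 2*t^2/225 - 2*t^3/10125 + t^4/303750 - t^5/22781250
      - 7*t^6/12301875000 := by
    nlinarith [mul_nonneg (mul_nonneg h0t h0t) hbt,
      mul_nonneg (mul_nonneg h0t h0t) (sub_nonneg.2 (pow_le_pow_left₀ h0t h1t 3)),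
      mul_nonneg (mul_nonneg h0t h0t) (sub_nonneg.2 (pow_le_pow_left₀ h0t h1t 4))]
  have h5 : 5 + 4 * Real.cos θ ≤ (3 - 4*t/15 + 2*t^2/225 - 2*t^3/10125 + t^4/303750
      - t^5/22781250 - 7*t^6/12301875000)^2 := by nlinarith [hc, hf]
  have h6 : Real.sqrt (5 + 4 * Real.cos θ) ≤ 3 - 4*t/15 + 2*t^2/225 - 2*t^3/10125
      + t^4/303750 - t^5/22781250 - 7*t^6/12301875000 := by
    calc Real.sqrt (5 + 4 * Real.cos θ)
        ≤ Real.sqrt ((3 - 4*t/15 + 2*t^2/225 - 2*t^3/10125 + t^4/303750 - t^5/22781250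
          - 7*t^6/12301875000)^2) := Real.sqrt_le_sqrt h5
      _ = _ := Real.sqrt_sq hR
  linarith [he, h6]
end

section
/- Let a be a natural number whose binary expansion consists of k maximal blocks of identical digits, of lengths l_1,…,l_k (so Σ l_i = N+1, the binary length of a). For each position j (0 ≤ j ≤ N), let b_j denote the length of the maximal run of digits equal to a_j ending at position j (counting from the least significant digit). Then l(a) ≤ Σ_{j=0}^{N} 2^{-b_j} ≤ 2·l(a) + 1, where l(a) is the number of occurrences of the pattern '01' in the binary expansion of a read from least significant digit. -/
/-- The `j`-th binary digit of `a` (least significant first). -/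
def dig (a j : ℕ) : ℕ := (Nat.digits 2 a).getD j 0

/-- `runLen a j` is the length of the maximal run of digits equal to `a_j`
ending at position `j`, i.e. the largest `m` with
`a_j = a_{j-1} = … = a_{j-m+1}`. -/
def runLen (a j : ℕ) : ℕ :=
  Nat.findGreatest (fun m => m ≤ j + 1 ∧ ∀ i < m, dig a (j - i) = dig a j) (j + 1)

/-- `lpat a` is the number of occurrences of the pattern `01` in the binary
expansion of `a`, read from the least significant digit. -/
def lpat (a : ℕ) : ℕ :=
  ((Finset.range (Nat.digits 2 a).length).filter
    (fun j => dig a j = 0 ∧ dig a (j + 1) = 1)).card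


namespace RunAux

lemma dig_le_one (a j : ℕ) : dig a j ≤ 1 := by
  unfold dig
  rcases lt_or_ge j (Nat.digits 2 a).length with h | h
  · rw [List.getD_eq_getElem _ _ h]
    have := Nat.digits_lt_base (by norm_num) (List.getElem_mem (l := Nat.digits 2 a) h)
    omega
  · rw [List.getD_eq_default _ _ h]; omega

lemma dig_zero (a : ℕ) : dig a 0 = a % 2 := by
  rcases Nat.eq_zero_or_pos a with rfl | h
  · simp [dig]
  · unfold dig
    rw [Nat.digits_def' (by norm_num : 1 < 2) h]
    simp

lemma dig_succ (a j : ℕ) : dig a (j + 1) = dig (a / 2) j := by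
  rcases Nat.eq_zero_or_pos a with rfl | h
  · simp [dig]
  · unfold dig
    rw [Nat.digits_def' (by norm_num : 1 < 2) h]
    simp

lemma dig_shift (a t j : ℕ) : dig a (j + t) = dig (a / 2 ^ t) j := by
  induction t generalizing a j with
  | zero => simp
  | succ t ih =>
    have h1 : j + (t + 1) = (j + t) + 1 := by ring
    have h2 : a / 2 / 2 ^ t = a / 2 ^ (t + 1) := by
      rw [Nat.div_div_eq_div_mul]
      congr 1
      ring
    rw [h1, dig_succ, ih, h2]

lemma len_div_two (a : ℕ) (h : a / 2 ≠ 0) :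
    (Nat.digits 2 a).length = (Nat.digits 2 (a / 2)).length + 1 := by
  have ha : 0 < a := by
    rcases Nat.eq_zero_or_pos a with rfl | h'
    · simp at h
    · exact h'
  rw [Nat.digits_def' (by norm_num : 1 < 2) ha]
  simp

lemma len_shift (a t : ℕ) (h : a / 2 ^ t ≠ 0) :
    (Nat.digits 2 a).length = (Nat.digits 2 (a / 2 ^ t)).length + t := by
  induction t generalizing a with
  | zero => simp
  | succ t ih =>
    have h2eq : a / 2 / 2 ^ t = a / 2 ^ (t + 1) := by
      rw [Nat.div_div_eq_div_mul]; congr 1; ring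
    have h2 : a / 2 / 2 ^ t ≠ 0 := by rw [h2eq]; exact h
    have h1 : a / 2 ≠ 0 := by
      intro e
      rw [e] at h2
      simp at h2
    rw [len_div_two a h1, ih _ h2, h2eq]
    ring

end RunAux
namespace RunAux

lemma len_pos (a : ℕ) (ha : a ≠ 0) : 0 < (Nat.digits 2 a).length :=
  List.length_pos_iff.mpr (Nat.digits_ne_nil_iff_ne_zero.mpr ha)

def tr (a : ℕ) : ℕ :=
  Nat.findGreatest (fun m => ∀ i < m, dig a i = dig a 0) (Nat.digits 2 a).length

lemma tr_le (a : ℕ) : tr a ≤ (Nat.digits 2 a).length := Nat.findGreatest_le _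

lemma one_le_tr (a : ℕ) (ha : a ≠ 0) : 1 ≤ tr a :=
  Nat.le_findGreatest (len_pos a ha) (by intro i hi; interval_cases i; rfl)

lemma tr_spec (a : ℕ) : ∀ i < tr a, dig a i = dig a 0 := by
  refine Nat.findGreatest_spec (P := fun m => ∀ i < m, dig a i = dig a 0)
    (m := 0) (Nat.zero_le _) ?_
  intro i hi
  exact absurd hi (Nat.not_lt_zero i)

lemma dig_tr_ne (a : ℕ) (h : tr a < (Nat.digits 2 a).length) :
    dig a (tr a) ≠ dig a 0 := by
  intro he
  refine Nat.findGreatest_is_greatest (lt_add_one (tr a)) (by omega) ?_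
  intro i hi
  rcases Nat.lt_succ_iff_lt_or_eq.mp hi with h' | rfl
  · exact tr_spec a i h'
  · exact he

lemma runLen_le (a j : ℕ) : runLen a j ≤ j + 1 := Nat.findGreatest_le _

lemma runLen_spec (a j : ℕ) : ∀ i < runLen a j, dig a (j - i) = dig a j := by
  have h : (fun m => m ≤ j + 1 ∧ ∀ i < m, dig a (j - i) = dig a j) 0 :=
    ⟨Nat.zero_le _, fun i hi => absurd hi (Nat.not_lt_zero i)⟩
  exact (Nat.findGreatest_spec (P := fun m => m ≤ j + 1 ∧ ∀ i < m, dig a (j - i) = dig a j)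
    (m := 0) (Nat.zero_le _) h).2

lemma runLen_of_lt_tr (a j : ℕ) (hj : j < tr a) : runLen a j = j + 1 := by
  have hP : (fun m => m ≤ j + 1 ∧ ∀ i < m, dig a (j - i) = dig a j) (j + 1) := by
    refine ⟨le_refl _, fun i hi => ?_⟩
    rw [tr_spec a _ (by omega), tr_spec a j hj]
  exact le_antisymm (runLen_le a j) (Nat.le_findGreatest le_rfl hP)

lemma runLen_of_ge_tr (a j : ℕ) (hj1 : tr a ≤ j) (hj2 : j < (Nat.digits 2 a).length) :
    runLen a j = runLen (a / 2 ^ tr a) (j - tr a) := by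
  have ha : a ≠ 0 := by
    intro e; rw [e] at hj2; simp at hj2
  set t := tr a with ht
  set j' := j - t with hj'
  have ht1 : 1 ≤ t := one_le_tr a ha
  have key : ∀ i ≤ j', dig a (j - i) = dig (a / 2 ^ t) (j' - i) := by
    intro i hi
    have e : j - i = (j' - i) + t := by omega
    rw [e, dig_shift]
  have hdigj : dig a j = dig (a / 2 ^ t) j' := by
    have := key 0 (Nat.zero_le _)
    simpa using this
  have hr_le : runLen a j ≤ j' + 1 := by
    by_contra hlt
    push_neg at hlt
    have h1 := runLen_spec a j (j - t) (by omega)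
    have h2 := runLen_spec a j (j - t + 1) (by omega)
    have e1 : j - (j - t) = t := by omega
    have e2 : j - (j - t + 1) = t - 1 := by omega
    rw [e1] at h1
    rw [e2] at h2
    have h3 := tr_spec a (t - 1) (by omega)
    have h4 := dig_tr_ne a (by omega)
    rw [← ht] at h4
    omega
  apply le_antisymm
  · refine Nat.le_findGreatest hr_le ⟨hr_le, ?_⟩
    intro i hi
    rw [← key i (by omega), ← hdigj]
    exact runLen_spec a j i (by omega)
  · have hr'le : runLen (a / 2 ^ t) j' ≤ j' + 1 := runLen_le _ _
    refine Nat.le_findGreatest (by omega) ⟨by omega, ?_⟩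
    intro i hi
    rw [key i (by omega), hdigj]
    exact runLen_spec (a / 2 ^ t) j' i hi

end RunAux
namespace RunAux

lemma geo (t : ℕ) : ∑ j ∈ Finset.range t, ((1:ℝ)/2)^(j+1) = 1 - (1/2)^t := by
  induction t with
  | zero => simp
  | succ t ih => rw [Finset.sum_range_succ, ih]; ring

lemma main : ∀ a : ℕ, a ≠ 0 →
    ((2 * lpat a + a % 2 : ℕ) : ℝ) / 2
        ≤ ∑ j ∈ Finset.range (Nat.digits 2 a).length, ((1:ℝ)/2) ^ runLen a j ∧
      ∑ j ∈ Finset.range (Nat.digits 2 a).length, ((1:ℝ)/2) ^ runLen a j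
        ≤ ((2 * lpat a + a % 2 : ℕ) : ℝ) - (1/2) ^ (Nat.digits 2 a).length := by
  intro a
  induction a using Nat.strong_induction_on with
  | _ a ih =>
  intro ha
  set t := tr a with htdef
  have ht1 : 1 ≤ t := one_le_tr a ha
  have htle : t ≤ (Nat.digits 2 a).length := tr_le a
  by_cases h0 : a / 2 ^ t = 0
  · -- single block: all digits equal, and they equal 1
    have hlt : a < 2 ^ t := by
      have h0' := Nat.div_eq_zero_iff.mp h0
      have : 0 < 2 ^ t := by positivity
      omega
    have hlen : (Nat.digits 2 a).length = t := by
      have h1 : (Nat.digits 2 a).length ≤ t := by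
        rw [Nat.digits_len 2 a (by norm_num) ha]
        have := Nat.log_lt_of_lt_pow ha hlt
        omega
      omega
    have htop : dig a ((Nat.digits 2 a).length - 1) ≠ 0 := by
      have hne : Nat.digits 2 a ≠ [] := Nat.digits_ne_nil_iff_ne_zero.mpr ha
      have h2 : dig a ((Nat.digits 2 a).length - 1) = (Nat.digits 2 a).getLast hne := by
        unfold dig
        rw [List.getD_eq_getElem _ _ (Nat.sub_lt (len_pos a ha) one_pos),
          List.getLast_eq_getElem]
      rw [h2]
      exact Nat.getLast_digit_ne_zero 2 ha
    have hlenpos := len_pos a ha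
    have hd0 : dig a 0 = 1 := by
      have h1 := tr_spec a ((Nat.digits 2 a).length - 1) (by omega)
      have h3 := dig_le_one a 0
      omega
    have hmod : a % 2 = 1 := by rw [← dig_zero]; exact hd0
    have hlp : lpat a = 0 := by
      unfold lpat
      rw [Finset.card_eq_zero, Finset.filter_eq_empty_iff]
      intro j hj
      rw [Finset.mem_range] at hj
      have := tr_spec a j (by omega)
      rintro ⟨h1, -⟩
      omega
    have hsum : ∑ j ∈ Finset.range (Nat.digits 2 a).length, ((1:ℝ)/2)^(runLen a j)
        = 1 - (1/2)^t := by
      rw [← geo t, hlen]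
      refine Finset.sum_congr rfl fun j hj => ?_
      rw [Finset.mem_range] at hj
      rw [runLen_of_lt_tr a j (by omega)]
    rw [hsum, hlp, hmod, hlen]
    have hpow : ((1:ℝ)/2)^t ≤ 1/2 := by
      calc ((1:ℝ)/2)^t ≤ (1/2)^1 := by
            exact pow_le_pow_of_le_one (by norm_num) (by norm_num) ht1
        _ = 1/2 := pow_one _
    constructor
    · push_cast; linarith
    · push_cast; linarith
  · -- at least two blocks
    have ha' : a / 2 ^ t ≠ 0 := h0
    have halt : a / 2 ^ t < a := by
      apply Nat.div_lt_self (Nat.pos_of_ne_zero ha)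
      exact one_lt_pow₀ (by norm_num) (by omega)
    have IH := ih (a / 2 ^ t) halt ha'
    have hlen : (Nat.digits 2 a).length = (Nat.digits 2 (a / 2 ^ t)).length + t :=
      len_shift a t ha'
    have hlen' : 1 ≤ (Nat.digits 2 (a / 2 ^ t)).length := len_pos _ ha'
    have htlt : t < (Nat.digits 2 a).length := by omega
    have hd' : dig (a / 2 ^ t) 0 = dig a t := by
      have := dig_shift a t 0
      simpa using this.symm
    have hne := dig_tr_ne a htlt
    rw [← htdef] at hne
    have hle0 := dig_le_one a 0
    have hlet := dig_le_one a t
    have hdz := dig_zero a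
    have hdz' := dig_zero (a / 2 ^ t)
    have hm2 : (a / 2 ^ t) % 2 = 1 - a % 2 := by omega
    have hsum : ∑ j ∈ Finset.range (Nat.digits 2 a).length, ((1:ℝ)/2)^(runLen a j)
        = (1 - (1/2)^t) +
          ∑ j ∈ Finset.range (Nat.digits 2 (a / 2 ^ t)).length,
            ((1:ℝ)/2)^(runLen (a / 2 ^ t) j) := by
      have e : (Nat.digits 2 a).length = t + (Nat.digits 2 (a / 2 ^ t)).length := by omega
      rw [e, Finset.sum_range_add]
      congr 1
      · rw [← geo t]
        refine Finset.sum_congr rfl fun j hj => ?_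
        rw [Finset.mem_range] at hj
        rw [runLen_of_lt_tr a j (by omega)]
      · refine Finset.sum_congr rfl fun j hj => ?_
        rw [Finset.mem_range] at hj
        rw [runLen_of_ge_tr a (t + j) (by omega) (by omega)]
        rw [← htdef]
        have e2 : t + j - t = j := by omega
        rw [e2]
    have hlp : lpat a = lpat (a / 2 ^ t) + (1 - a % 2) := by
      simp only [lpat, Finset.card_filter]
      have e : (Nat.digits 2 a).length = t + (Nat.digits 2 (a / 2 ^ t)).length := by omega
      rw [e, Finset.sum_range_add]
      have e2 : ∀ j ∈ Finset.range (Nat.digits 2 (a / 2 ^ t)).length,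
          (if dig a (t + j) = 0 ∧ dig a (t + j + 1) = 1 then (1:ℕ) else 0)
          = (if dig (a / 2 ^ t) j = 0 ∧ dig (a / 2 ^ t) (j + 1) = 1 then 1 else 0) := by
        intro j hj
        have g1 : dig a (t + j) = dig (a / 2 ^ t) j := by
          rw [add_comm]; exact dig_shift a t j
        have g2 : dig a (t + j + 1) = dig (a / 2 ^ t) (j + 1) := by
          have e3 : t + j + 1 = (j + 1) + t := by ring
          rw [e3]; exact dig_shift a t (j + 1)
        rw [g1, g2]
      rw [Finset.sum_congr rfl e2]
      have e3 : ∑ j ∈ Finset.range t, (if dig a j = 0 ∧ dig a (j + 1) = 1 then (1:ℕ) else 0)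
          = 1 - a % 2 := by
        have e4 : t = (t - 1) + 1 := by omega
        rw [e4, Finset.sum_range_succ]
        have e5 : ∀ j ∈ Finset.range (t - 1),
            (if dig a j = 0 ∧ dig a (j + 1) = 1 then (1:ℕ) else 0) = 0 := by
          intro j hj
          rw [Finset.mem_range] at hj
          rw [if_neg]
          have g1 := tr_spec a j (by omega)
          have g2 := tr_spec a (j + 1) (by omega)
          rintro ⟨u1, u2⟩
          omega
        rw [Finset.sum_congr rfl e5, Finset.sum_const_zero, zero_add]
        have g1 := tr_spec a (t - 1) (by omega)
        have e6 : t - 1 + 1 = t := by omega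
        rw [e6]
        rcases Nat.mod_two_eq_zero_or_one a with hp | hp
        · rw [if_pos ⟨by omega, by omega⟩]
          omega
        · rw [if_neg (by rintro ⟨u1, -⟩; omega)]
          omega
      rw [e3]
      exact add_comm _ _
    obtain ⟨IH1, IH2⟩ := IH
    rw [hsum, hlp]
    have hpow : ((1:ℝ)/2)^t ≤ 1/2 := by
      calc ((1:ℝ)/2)^t ≤ (1/2)^1 := by
            exact pow_le_pow_of_le_one (by norm_num) (by norm_num) ht1
        _ = 1/2 := pow_one _
    have hpow2 : (0:ℝ) ≤ (1/2)^((Nat.digits 2 (a / 2 ^ t)).length) := by positivity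
    have hpow3 : ((1:ℝ)/2)^((Nat.digits 2 a).length) ≤ (1/2)^t :=
      pow_le_pow_of_le_one (by norm_num) (by norm_num) htle
    rcases Nat.mod_two_eq_zero_or_one a with hp | hp
    · rw [hp] at hm2 ⊢
      rw [hm2] at IH1 IH2
      push_cast at IH1 IH2 ⊢
      constructor
      · linarith
      · linarith
    · rw [hp] at hm2 ⊢
      rw [hm2] at IH1 IH2
      push_cast at IH1 IH2 ⊢
      constructor
      · linarith
      · linarith

end RunAux


theorem sum_pow_runLen_bounds (a : ℕ) (ha : 1 ≤ a) :
    (lpat a : ℝ) ≤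
        ∑ j ∈ Finset.range (Nat.digits 2 a).length, ((1 : ℝ) / 2) ^ runLen a j ∧
      ∑ j ∈ Finset.range (Nat.digits 2 a).length, ((1 : ℝ) / 2) ^ runLen a j ≤
        2 * (lpat a : ℝ) + 1 := by
  have ha0 : a ≠ 0 := by omega
  obtain ⟨h1, h2⟩ := RunAux.main a ha0
  have hma : a % 2 ≤ 1 := by omega
  have hp : (0:ℝ) ≤ (1/2)^((Nat.digits 2 a).length) := by positivity
  constructor
  · refine le_trans ?_ h1
    have hm0 : (0:ℝ) ≤ ((a % 2 : ℕ) : ℝ) := by positivity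
    push_cast at hm0 ⊢
    linarith
  · refine le_trans h2 ?_
    have hm1 : ((a % 2 : ℕ) : ℝ) ≤ 1 := by exact_mod_cast hma
    push_cast at hm1 ⊢
    linarith
end
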